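/- Let M be the d×d matrix with entries M_{i,l} = C(l, i-1) (binomial coefficient 'l choose i-1') for 1 ≤ i,l ≤ d. Then M is invertible, and the (1,1) entry of M⁻¹ equals d. -/

import Mathlib

private lemma aux_alt (n : ℕ) :
    ∑ l ∈ Finset.range (n + 1), ((-1 : ℚ)) ^ l * (n.choose l) = if n = 0 then 1 else 0 := by
  have h := Int.alternating_sum_range_choose (n := n)
  have : ((∑ m ∈ Finset.range (n + 1), ((-1) ^ m * n.choose m : ℤ) : ℤ) : ℚ)
      = ∑ l ∈ Finset.range (n + 1), ((-1 : ℚ)) ^ l * (n.choose l) := by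
    push_cast
    rfl
  rw [← this, h]
  split <;> norm_num

private lemma aux_orth (n m : ℕ) :
    ∑ l ∈ Finset.range (n + 1), ((-1 : ℚ)) ^ l * (n.choose l) * (l.choose m)
      = if n = m then (-1 : ℚ) ^ m else 0 := by
  by_cases hmn : m ≤ n
  · have hsplit : n + 1 = m + (n - m + 1) := by omega
    rw [hsplit, Finset.sum_range_add]
    have h1 : ∑ l ∈ Finset.range m, ((-1 : ℚ)) ^ l * (n.choose l) * (l.choose m) = 0 := by
      apply Finset.sum_eq_zero
      intro l hl
      rw [Finset.mem_range] at hl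
      rw [Nat.choose_eq_zero_of_lt hl]
      simp
    rw [h1, zero_add]
    have h2 : ∀ t ∈ Finset.range (n - m + 1),
        ((-1 : ℚ)) ^ (m + t) * (n.choose (m + t)) * ((m + t).choose m)
          = ((-1 : ℚ)) ^ m * (n.choose m) * (((-1 : ℚ)) ^ t * ((n - m).choose t)) := by
      intro t ht
      rw [Finset.mem_range] at ht
      have hc' : n.choose (m + t) * (m + t).choose m = n.choose m * (n - m).choose t := by
        have hc := Nat.choose_mul (n := n) (k := m + t) (s := m) (by omega)
        simpa using hc
      have hq : ((n.choose (m + t) : ℚ)) * ((m + t).choose m)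
          = (n.choose m : ℚ) * ((n - m).choose t) := by exact_mod_cast hc'
      rw [pow_add]
      linear_combination ((-1 : ℚ)) ^ m * ((-1 : ℚ)) ^ t * hq
    rw [Finset.sum_congr rfl h2, ← Finset.mul_sum, aux_alt (n - m)]
    by_cases h : n = m
    · simp [h, if_pos h]
    · have : n - m ≠ 0 := by omega
      simp [h, this]
  · have h1 : ∑ l ∈ Finset.range (n + 1), ((-1 : ℚ)) ^ l * (n.choose l) * (l.choose m) = 0 := by
      apply Finset.sum_eq_zero
      intro l hl
      rw [Finset.mem_range] at hl
      rw [Nat.choose_eq_zero_of_lt (show l < m by omega)]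
      simp
    rw [h1, if_neg (by omega)]

theorem binom_matrix_inv_entry (d : ℕ) (hd : 0 < d)
    (M : Matrix (Fin d) (Fin d) ℚ)
    (hM : ∀ i l : Fin d, M i l = (Nat.choose (l.1 + 1) i.1 : ℚ)) :
    IsUnit M ∧ M⁻¹ ⟨0, hd⟩ ⟨0, hd⟩ = (d : ℚ) := by
  set N : Matrix (Fin d) (Fin d) ℚ := fun i l =>
    (-1 : ℚ) ^ (i.1 + l.1) * ((d.choose (i.1 + 1) : ℚ) - (l.1.choose (i.1 + 1) : ℚ)) with hN
  have hNM : N * M = 1 := by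
    ext i j
    rw [Matrix.mul_apply, Matrix.one_apply]
    have hf : ∀ l : Fin d, N i l * M l j
        = (fun l : ℕ => (-1 : ℚ) ^ (i.1 + l) * ((d.choose (i.1 + 1) : ℚ)
            - (l.choose (i.1 + 1) : ℚ)) * ((j.1 + 1).choose l : ℚ)) l.1 := by
      intro l
      rw [hM, hN]
    set f : ℕ → ℚ := fun l => (-1 : ℚ) ^ (i.1 + l) * ((d.choose (i.1 + 1) : ℚ)
            - (l.choose (i.1 + 1) : ℚ)) * ((j.1 + 1).choose l : ℚ) with hfdef
    have hsum0 : ∑ l : Fin d, N i l * M l j = ∑ l ∈ Finset.range d, f l := by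
      rw [← Fin.sum_univ_eq_sum_range f d]
      exact Finset.sum_congr rfl fun l _ => hf l
    rw [hsum0]
    have hext : ∑ l ∈ Finset.range d, f l = ∑ l ∈ Finset.range (d + (j.1 + 2)), f l := by
      apply Finset.sum_subset (Finset.range_subset_range.mpr (by omega))
      intro l _ hl
      rw [Finset.mem_range, not_lt] at hl
      rcases eq_or_lt_of_le hl with h | h
      · simp [hfdef, ← h]
      · have : (j.1 + 1).choose l = 0 := Nat.choose_eq_zero_of_lt (by omega)
        simp [hfdef, this]
    rw [hext]
    have hsplit : ∀ l : ℕ, f l = (-1 : ℚ) ^ i.1 * (d.choose (i.1 + 1) : ℚ)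
          * ((-1 : ℚ) ^ l * ((j.1 + 1).choose l : ℚ))
        - (-1 : ℚ) ^ i.1 * ((-1 : ℚ) ^ l * ((j.1 + 1).choose l : ℚ) * (l.choose (i.1 + 1) : ℚ)) := by
      intro l
      simp only [hfdef, pow_add]
      ring
    rw [Finset.sum_congr rfl (fun l _ => hsplit l), Finset.sum_sub_distrib,
      ← Finset.mul_sum, ← Finset.mul_sum]
    have hS1 : ∑ l ∈ Finset.range (d + (j.1 + 2)), (-1 : ℚ) ^ l * ((j.1 + 1).choose l : ℚ) = 0 := by
      rw [← Finset.sum_subset (Finset.range_subset_range.mpr (show j.1 + 2 ≤ d + (j.1 + 2) by omega))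
        (by
          intro l _ hl
          rw [Finset.mem_range, not_lt] at hl
          rw [Nat.choose_eq_zero_of_lt (by omega)]
          simp)]
      have := aux_alt (j.1 + 1)
      simpa using this
    have hS2 : ∑ l ∈ Finset.range (d + (j.1 + 2)),
        (-1 : ℚ) ^ l * ((j.1 + 1).choose l : ℚ) * (l.choose (i.1 + 1) : ℚ)
          = if j.1 + 1 = i.1 + 1 then (-1 : ℚ) ^ (i.1 + 1) else 0 := by
      rw [← Finset.sum_subset (Finset.range_subset_range.mpr (show j.1 + 2 ≤ d + (j.1 + 2) by omega))
        (by
          intro l _ hl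
          rw [Finset.mem_range, not_lt] at hl
          rw [Nat.choose_eq_zero_of_lt (show j.1 + 1 < l by omega)]
          simp)]
      exact aux_orth (j.1 + 1) (i.1 + 1)
    rw [hS1, hS2, mul_zero, zero_sub]
    by_cases h : i = j
    · subst h
      have hone : (-1 : ℚ) ^ i.1 * (-1 : ℚ) ^ i.1 = 1 := by
        rw [← pow_add]
        exact Even.neg_one_pow ⟨i.1, rfl⟩
      simp [pow_succ, hone]
    · have : j.1 + 1 ≠ i.1 + 1 := by
        intro hc
        exact h (Fin.ext (by omega)).symm
      simp [this, h, Fin.val_inj, Ne.symm h]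
  have hMN : M * N = 1 := mul_eq_one_comm.mp hNM
  have hInv : Invertible M := invertibleOfRightInverse M N hMN
  refine ⟨isUnit_of_invertible M, ?_⟩
  rw [Matrix.inv_eq_right_inv hMN, hN]
  simp [Nat.choose_one_right]
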